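/- The quantity 2 · V(π/4) / π², where V(π/4) = 2π ∫₀^{π/4} ∫_{−π/2}^{π/2} τ · sin(τ cos v) dv dτ, satisfies 0.3946 < 2 · V(π/4) / π² < 0.3947. (This is the density δ(R₂, K₂) ≈ 0.39461737 of the simply transitive packing with R₂ = π/4 in equation (2.9) of the paper: the Dirichlet–Voronoi cell is a trigonal prism of spherical base area π/2 and height π, hence of volume π²/2.) -/

import Mathlib

open Real

/-- The volume of the geodesic ball of radius `ρ` in `S² × ℝ` geometry
(Theorem 2.4 of the paper). -/
noncomputable def ballVol (ρ : ℝ) : ℝ :=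
  2 * π * ∫ τ in (0 : ℝ)..ρ, ∫ v in (-(π / 2))..(π / 2), τ * Real.sin (τ * Real.cos v)

/-- If `f 0 = 0` and `f' ≥ 0` on `[0, ∞)` then `f ≥ 0` on `[0, ∞)`. -/
lemma nonneg_of_deriv_nonneg (f f' : ℝ → ℝ) (hder : ∀ x, HasDerivAt f (f' x) x)
    (h0 : f 0 = 0) (hpos : ∀ x, 0 ≤ x → 0 ≤ f' x) : ∀ x, 0 ≤ x → 0 ≤ f x := by
  intro x hx
  have hdiff : Differentiable ℝ f := fun y => (hder y).differentiableAt
  have mono : MonotoneOn f (Set.Ici 0) := by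
    apply monotoneOn_of_deriv_nonneg (convex_Ici 0) hdiff.continuous.continuousOn
      hdiff.differentiableOn
    intro y hy
    rw [interior_Ici] at hy
    rw [(hder y).deriv]
    exact hpos y hy.le
  have := mono Set.self_mem_Ici hx hx
  rwa [h0] at this

lemma sin_ge_t3 : ∀ x : ℝ, 0 ≤ x → x - x ^ 3 / 6 ≤ Real.sin x := by
  have h := nonneg_of_deriv_nonneg (fun y => Real.sin y - (y - y ^ 3 / 6))
    (fun y => Real.cos y - (1 - 3 * y ^ 2 / 6)) ?_ (by norm_num) ?_
  · intro x hx; have := h x hx; simp at this; linarith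
  · intro y
    exact (Real.hasDerivAt_sin y).sub
      (((hasDerivAt_id y).sub ((hasDerivAt_pow 3 y).div_const 6)).congr_deriv (by
        push_cast; ring))
  · intro y _
    have := Real.one_sub_sq_div_two_le_cos (x := y)
    linarith

lemma cos_le_t4 : ∀ x : ℝ, 0 ≤ x → Real.cos x ≤ 1 - x ^ 2 / 2 + x ^ 4 / 24 := by
  have h := nonneg_of_deriv_nonneg (fun y => 1 - y ^ 2 / 2 + y ^ 4 / 24 - Real.cos y)
    (fun y => -(2 * y / 2) + 4 * y ^ 3 / 24 + Real.sin y) ?_ (by norm_num) ?_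
  · intro x hx; have := h x hx; linarith
  · intro y
    have : HasDerivAt (fun y : ℝ => 1 - y ^ 2 / 2 + y ^ 4 / 24 - Real.cos y)
        (0 - 2 * y ^ 1 / 2 + 4 * y ^ 3 / 24 - (-Real.sin y)) y := by
      exact (((hasDerivAt_const y (1:ℝ)).sub ((hasDerivAt_pow 2 y).div_const 2)).add
        ((hasDerivAt_pow 4 y).div_const 24)).sub (Real.hasDerivAt_cos y) |>.congr_deriv (by
          push_cast; ring)
    exact this.congr_deriv (by ring)
  · intro y hy
    have := sin_ge_t3 y hy
    nlinarith

lemma sin_le_t5 : ∀ x : ℝ, 0 ≤ x → Real.sin x ≤ x - x ^ 3 / 6 + x ^ 5 / 120 := by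
  have h := nonneg_of_deriv_nonneg (fun y => y - y ^ 3 / 6 + y ^ 5 / 120 - Real.sin y)
    (fun y => 1 - 3 * y ^ 2 / 6 + 5 * y ^ 4 / 120 - Real.cos y) ?_ (by norm_num) ?_
  · intro x hx; have := h x hx; linarith
  · intro y
    exact ((((hasDerivAt_id y).sub ((hasDerivAt_pow 3 y).div_const 6)).add
      ((hasDerivAt_pow 5 y).div_const 120)).sub (Real.hasDerivAt_sin y)).congr_deriv (by
        push_cast; ring)
  · intro y hy
    have := cos_le_t4 y hy
    nlinarith

lemma cos_ge_t6 : ∀ x : ℝ, 0 ≤ x → 1 - x ^ 2 / 2 + x ^ 4 / 24 - x ^ 6 / 720 ≤ Real.cos x := by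
  have h := nonneg_of_deriv_nonneg
    (fun y => Real.cos y - (1 - y ^ 2 / 2 + y ^ 4 / 24 - y ^ 6 / 720))
    (fun y => -Real.sin y - (-(2 * y / 2) + 4 * y ^ 3 / 24 - 6 * y ^ 5 / 720)) ?_
    (by norm_num) ?_
  · intro x hx; have := h x hx; linarith
  · intro y
    exact ((Real.hasDerivAt_cos y).sub
      ((((hasDerivAt_const y (1:ℝ)).sub ((hasDerivAt_pow 2 y).div_const 2)).add
        ((hasDerivAt_pow 4 y).div_const 24)).sub
        ((hasDerivAt_pow 6 y).div_const 720))).congr_deriv (by push_cast; ring)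
  · intro y hy
    have := sin_le_t5 y hy
    nlinarith

lemma sin_ge_t7 : ∀ x : ℝ, 0 ≤ x →
    x - x ^ 3 / 6 + x ^ 5 / 120 - x ^ 7 / 5040 ≤ Real.sin x := by
  have h := nonneg_of_deriv_nonneg
    (fun y => Real.sin y - (y - y ^ 3 / 6 + y ^ 5 / 120 - y ^ 7 / 5040))
    (fun y => Real.cos y - (1 - 3 * y ^ 2 / 6 + 5 * y ^ 4 / 120 - 7 * y ^ 6 / 5040)) ?_
    (by norm_num) ?_
  · intro x hx; have := h x hx; linarith
  · intro y
    exact ((Real.hasDerivAt_sin y).sub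
      ((((hasDerivAt_id y).sub ((hasDerivAt_pow 3 y).div_const 6)).add
        ((hasDerivAt_pow 5 y).div_const 120)).sub
        ((hasDerivAt_pow 7 y).div_const 5040))).congr_deriv (by push_cast; ring)
  · intro y hy
    have := cos_ge_t6 y hy
    nlinarith

/-- `∫ cos v dv = 2` over `[-π/2, π/2]`. -/
lemma int_cos1 : ∫ v in (-(π / 2))..(π / 2), Real.cos v = 2 := by
  rw [integral_cos]; norm_num

lemma int_cos3 : ∫ v in (-(π / 2))..(π / 2), Real.cos v ^ 3 = 4 / 3 := by
  have h := integral_cos_pow (a := -(π / 2)) (b := π / 2) 1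
  simp only [Real.cos_pi_div_two, pow_one] at h
  rw [show ((1:ℕ) + 2) = 3 from rfl] at h
  rw [h, int_cos1]
  simp [Real.cos_pi_div_two]
  norm_num

lemma int_cos5 : ∫ v in (-(π / 2))..(π / 2), Real.cos v ^ 5 = 16 / 15 := by
  have h := integral_cos_pow (a := -(π / 2)) (b := π / 2) 3
  rw [show ((3:ℕ) + 2) = 5 from rfl] at h
  rw [h, int_cos3]
  simp [Real.cos_pi_div_two]
  norm_num

lemma int_cos7 : ∫ v in (-(π / 2))..(π / 2), Real.cos v ^ 7 = 32 / 35 := by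
  have h := integral_cos_pow (a := -(π / 2)) (b := π / 2) 5
  rw [show ((5:ℕ) + 2) = 7 from rfl] at h
  rw [h, int_cos5]
  simp [Real.cos_pi_div_two]
  norm_num

/-- Evaluation of the lower-bound polynomial inner integral. -/
lemma inner_poly_lo (τ : ℝ) :
    (∫ v in (-(π / 2))..(π / 2),
        (τ ^ 2 * Real.cos v - τ ^ 4 * Real.cos v ^ 3 / 6 + τ ^ 6 * Real.cos v ^ 5 / 120
          - τ ^ 8 * Real.cos v ^ 7 / 5040)) =
      2 * τ ^ 2 - 2 * τ ^ 4 / 9 + 2 * τ ^ 6 / 225 - 2 * τ ^ 8 / 11025 := by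
  have i1 : IntervalIntegrable (fun v => τ ^ 2 * Real.cos v) MeasureTheory.volume
      (-(π / 2)) (π / 2) := (by fun_prop : Continuous _).intervalIntegrable _ _
  have i3 : IntervalIntegrable (fun v => τ ^ 4 * Real.cos v ^ 3 / 6) MeasureTheory.volume
      (-(π / 2)) (π / 2) := (by fun_prop : Continuous _).intervalIntegrable _ _
  have i5 : IntervalIntegrable (fun v => τ ^ 6 * Real.cos v ^ 5 / 120) MeasureTheory.volume
      (-(π / 2)) (π / 2) := (by fun_prop : Continuous _).intervalIntegrable _ _
  have i7 : IntervalIntegrable (fun v => τ ^ 8 * Real.cos v ^ 7 / 5040) MeasureTheory.volume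
      (-(π / 2)) (π / 2) := (by fun_prop : Continuous _).intervalIntegrable _ _
  rw [intervalIntegral.integral_sub ((i1.sub i3).add i5) i7,
    intervalIntegral.integral_add (i1.sub i3) i5, intervalIntegral.integral_sub i1 i3]
  simp only [intervalIntegral.integral_div, intervalIntegral.integral_const_mul]
  rw [int_cos1, int_cos3, int_cos5, int_cos7]
  ring

/-- Evaluation of the upper-bound polynomial inner integral. -/
lemma inner_poly_hi (τ : ℝ) :
    (∫ v in (-(π / 2))..(π / 2),
        (τ ^ 2 * Real.cos v - τ ^ 4 * Real.cos v ^ 3 / 6 + τ ^ 6 * Real.cos v ^ 5 / 120)) =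
      2 * τ ^ 2 - 2 * τ ^ 4 / 9 + 2 * τ ^ 6 / 225 := by
  have i1 : IntervalIntegrable (fun v => τ ^ 2 * Real.cos v) MeasureTheory.volume
      (-(π / 2)) (π / 2) := (by fun_prop : Continuous _).intervalIntegrable _ _
  have i3 : IntervalIntegrable (fun v => τ ^ 4 * Real.cos v ^ 3 / 6) MeasureTheory.volume
      (-(π / 2)) (π / 2) := (by fun_prop : Continuous _).intervalIntegrable _ _
  have i5 : IntervalIntegrable (fun v => τ ^ 6 * Real.cos v ^ 5 / 120) MeasureTheory.volume
      (-(π / 2)) (π / 2) := (by fun_prop : Continuous _).intervalIntegrable _ _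
  rw [intervalIntegral.integral_add (i1.sub i3) i5, intervalIntegral.integral_sub i1 i3]
  simp only [intervalIntegral.integral_div, intervalIntegral.integral_const_mul]
  rw [int_cos1, int_cos3, int_cos5]
  ring

/-- The density `δ(R₂, K₂) ≈ 0.39461737` of the simply transitive packing with
`R₂ = π/4` (equation (2.9)): the Dirichlet–Voronoi cell is a trigonal prism of volume
`π²/2`, so the density is `2 · V(π/4) / π^2`. -/
theorem density_R2_bounds :
    0.3946 < 2 * ballVol (π / 4) / π ^ 2 ∧ 2 * ballVol (π / 4) / π ^ 2 < 0.3947 := by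
  have hπ : (0:ℝ) < π := Real.pi_pos
  set F : ℝ → ℝ := fun τ => ∫ v in (-(π / 2))..(π / 2), τ * Real.sin (τ * Real.cos v) with hF
  have hFcont : Continuous F := by
    apply intervalIntegral.continuous_parametric_intervalIntegral_of_continuous'
    fun_prop
  -- pointwise inner bounds for 0 ≤ τ
  have inner_lo : ∀ τ : ℝ, 0 ≤ τ →
      2 * τ ^ 2 - 2 * τ ^ 4 / 9 + 2 * τ ^ 6 / 225 - 2 * τ ^ 8 / 11025 ≤ F τ := by
    intro τ hτ
    rw [← inner_poly_lo τ, hF]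
    apply intervalIntegral.integral_mono_on (by linarith)
      ((by fun_prop : Continuous _).intervalIntegrable _ _)
      ((by fun_prop : Continuous _).intervalIntegrable _ _)
    intro v hv
    have hc : 0 ≤ Real.cos v := Real.cos_nonneg_of_mem_Icc (by
      constructor
      · exact hv.1
      · exact hv.2)
    have hx : 0 ≤ τ * Real.cos v := mul_nonneg hτ hc
    have key := sin_ge_t7 (τ * Real.cos v) hx
    have := mul_le_mul_of_nonneg_left key hτ
    calc τ ^ 2 * Real.cos v - τ ^ 4 * Real.cos v ^ 3 / 6 + τ ^ 6 * Real.cos v ^ 5 / 120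
          - τ ^ 8 * Real.cos v ^ 7 / 5040
        = τ * (τ * Real.cos v - (τ * Real.cos v) ^ 3 / 6 + (τ * Real.cos v) ^ 5 / 120
            - (τ * Real.cos v) ^ 7 / 5040) := by ring
      _ ≤ τ * Real.sin (τ * Real.cos v) := this
  have inner_hi : ∀ τ : ℝ, 0 ≤ τ →
      F τ ≤ 2 * τ ^ 2 - 2 * τ ^ 4 / 9 + 2 * τ ^ 6 / 225 := by
    intro τ hτ
    rw [← inner_poly_hi τ, hF]
    apply intervalIntegral.integral_mono_on (by linarith)
      ((by fun_prop : Continuous _).intervalIntegrable _ _)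
      ((by fun_prop : Continuous _).intervalIntegrable _ _)
    intro v hv
    have hc : 0 ≤ Real.cos v := Real.cos_nonneg_of_mem_Icc ⟨hv.1, hv.2⟩
    have hx : 0 ≤ τ * Real.cos v := mul_nonneg hτ hc
    have key := sin_le_t5 (τ * Real.cos v) hx
    have := mul_le_mul_of_nonneg_left key hτ
    calc τ * Real.sin (τ * Real.cos v)
        ≤ τ * (τ * Real.cos v - (τ * Real.cos v) ^ 3 / 6 + (τ * Real.cos v) ^ 5 / 120) := this
      _ = τ ^ 2 * Real.cos v - τ ^ 4 * Real.cos v ^ 3 / 6 + τ ^ 6 * Real.cos v ^ 5 / 120 := by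
          ring
  -- outer integrals of the polynomial bounds
  set ρ : ℝ := π / 4 with hρ
  have hρ0 : (0:ℝ) ≤ ρ := by positivity
  have outer_lo : (∫ τ in (0:ℝ)..ρ,
      (2 * τ ^ 2 - 2 * τ ^ 4 / 9 + 2 * τ ^ 6 / 225 - 2 * τ ^ 8 / 11025)) =
      2 * ρ ^ 3 / 3 - 2 * ρ ^ 5 / 45 + 2 * ρ ^ 7 / 1575 - 2 * ρ ^ 9 / 99225 := by
    have key : ∀ x ∈ Set.uIcc (0:ℝ) ρ, HasDerivAt
        (fun y : ℝ => 2 * y ^ 3 / 3 - 2 * y ^ 5 / 45 + 2 * y ^ 7 / 1575 - 2 * y ^ 9 / 99225)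
        (2 * x ^ 2 - 2 * x ^ 4 / 9 + 2 * x ^ 6 / 225 - 2 * x ^ 8 / 11025) x := by
      intro x _
      have := ((((hasDerivAt_pow 3 x).const_mul (2:ℝ)).div_const 3).sub
        (((hasDerivAt_pow 5 x).const_mul (2:ℝ)).div_const 45)).add
        (((hasDerivAt_pow 7 x).const_mul (2:ℝ)).div_const 1575) |>.sub
        (((hasDerivAt_pow 9 x).const_mul (2:ℝ)).div_const 99225)
      exact this.congr_deriv (by push_cast; ring)
    rw [intervalIntegral.integral_eq_sub_of_hasDerivAt key
      ((by fun_prop : Continuous _).intervalIntegrable _ _)]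
    norm_num
  have outer_hi : (∫ τ in (0:ℝ)..ρ, (2 * τ ^ 2 - 2 * τ ^ 4 / 9 + 2 * τ ^ 6 / 225)) =
      2 * ρ ^ 3 / 3 - 2 * ρ ^ 5 / 45 + 2 * ρ ^ 7 / 1575 := by
    have key : ∀ x ∈ Set.uIcc (0:ℝ) ρ, HasDerivAt
        (fun y : ℝ => 2 * y ^ 3 / 3 - 2 * y ^ 5 / 45 + 2 * y ^ 7 / 1575)
        (2 * x ^ 2 - 2 * x ^ 4 / 9 + 2 * x ^ 6 / 225) x := by
      intro x _
      have := ((((hasDerivAt_pow 3 x).const_mul (2:ℝ)).div_const 3).sub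
        (((hasDerivAt_pow 5 x).const_mul (2:ℝ)).div_const 45)).add
        (((hasDerivAt_pow 7 x).const_mul (2:ℝ)).div_const 1575)
      exact this.congr_deriv (by push_cast; ring)
    rw [intervalIntegral.integral_eq_sub_of_hasDerivAt key
      ((by fun_prop : Continuous _).intervalIntegrable _ _)]
    norm_num
  -- bounds on the double integral I
  set I : ℝ := ∫ τ in (0:ℝ)..ρ, F τ with hI
  have I_lo : 2 * ρ ^ 3 / 3 - 2 * ρ ^ 5 / 45 + 2 * ρ ^ 7 / 1575 - 2 * ρ ^ 9 / 99225 ≤ I := by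
    rw [← outer_lo, hI]
    apply intervalIntegral.integral_mono_on hρ0
      ((by fun_prop : Continuous _).intervalIntegrable _ _)
      (hFcont.intervalIntegrable _ _)
    intro τ hτ
    exact inner_lo τ hτ.1
  have I_hi : I ≤ 2 * ρ ^ 3 / 3 - 2 * ρ ^ 5 / 45 + 2 * ρ ^ 7 / 1575 := by
    rw [← outer_hi, hI]
    apply intervalIntegral.integral_mono_on hρ0
      (hFcont.intervalIntegrable _ _)
      ((by fun_prop : Continuous _).intervalIntegrable _ _)
    intro τ hτ
    exact inner_hi τ hτ.1
  -- the density equals 4 I / π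
  have hdens : 2 * ballVol (π / 4) / π ^ 2 = 4 * I / π := by
    rw [ballVol, hI, hF, hρ]
    field_simp
    ring
  -- numerical bounds on powers of π
  have hp1 : (3.141592:ℝ) < π := Real.pi_gt_d6
  have hp2 : π < 3.141593 := Real.pi_lt_d6
  have h2a : (9.8696:ℝ) < π ^ 2 := by nlinarith
  have h2b : π ^ 2 < 9.86961 := by nlinarith
  have h4a : (97.409004:ℝ) < π ^ 4 := by
    have h := mul_lt_mul'' h2a h2a (by norm_num) (by norm_num)
    have e : π ^ 4 = π ^ 2 * π ^ 2 := by ring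
    linarith
  have h4b : π ^ 4 < 97.4092016 := by
    have h := mul_lt_mul'' h2b h2b (by positivity) (by positivity)
    have e : π ^ 4 = π ^ 2 * π ^ 2 := by ring
    linarith
  have h6a : (961.3879:ℝ) < π ^ 6 := by
    have h := mul_lt_mul'' h2a h4a (by norm_num) (by norm_num)
    have e : π ^ 6 = π ^ 2 * π ^ 4 := by ring
    linarith
  have h6b : π ^ 6 < 961.390831 := by
    have h := mul_lt_mul'' h2b h4b (by positivity) (by positivity)
    have e : π ^ 6 = π ^ 2 * π ^ 4 := by ring
    linarith
  have h8a : (9488.514:ℝ) < π ^ 8 := by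
    have h := mul_lt_mul'' h4a h4a (by norm_num) (by norm_num)
    have e : π ^ 8 = π ^ 4 * π ^ 4 := by ring
    linarith
  have h8b : π ^ 8 < 9488.5526 := by
    have h := mul_lt_mul'' h4b h4b (by positivity) (by positivity)
    have e : π ^ 8 = π ^ 4 * π ^ 4 := by ring
    linarith
  have lo_val : 4 * (2 * ρ ^ 3 / 3 - 2 * ρ ^ 5 / 45 + 2 * ρ ^ 7 / 1575 - 2 * ρ ^ 9 / 99225) / π
      = π ^ 2 / 24 - π ^ 4 / 5760 + π ^ 6 / 3225600 - π ^ 8 / 3251404800 := by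
    rw [hρ, div_eq_iff (ne_of_gt hπ)]
    ring
  have hi_val : 4 * (2 * ρ ^ 3 / 3 - 2 * ρ ^ 5 / 45 + 2 * ρ ^ 7 / 1575) / π
      = π ^ 2 / 24 - π ^ 4 / 5760 + π ^ 6 / 3225600 := by
    rw [hρ, div_eq_iff (ne_of_gt hπ)]
    ring
  constructor
  · rw [hdens]
    have step : 4 * (2 * ρ ^ 3 / 3 - 2 * ρ ^ 5 / 45 + 2 * ρ ^ 7 / 1575 - 2 * ρ ^ 9 / 99225) / π
        ≤ 4 * I / π := by
      gcongr
    calc (0.3946:ℝ) < π ^ 2 / 24 - π ^ 4 / 5760 + π ^ 6 / 3225600 - π ^ 8 / 3251404800 := by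
          norm_num; linarith
      _ = _ := lo_val.symm
      _ ≤ 4 * I / π := step
  · rw [hdens]
    have step : 4 * I / π ≤ 4 * (2 * ρ ^ 3 / 3 - 2 * ρ ^ 5 / 45 + 2 * ρ ^ 7 / 1575) / π := by
      gcongr
    calc 4 * I / π ≤ 4 * (2 * ρ ^ 3 / 3 - 2 * ρ ^ 5 / 45 + 2 * ρ ^ 7 / 1575) / π := step
      _ = π ^ 2 / 24 - π ^ 4 / 5760 + π ^ 6 / 3225600 := hi_val
      _ < 0.3947 := by norm_num; linarith
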